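/- Let C : S² → ℝ be continuous, let n₀ ∈ S² and let u₀ ∈ ℝ with u₀ > C(n₀). Then there exist t ∈ ℝ and 𝐱 ∈ ℝ³ such that t − ⟨𝐱, n⟩ > C(n) for every n ∈ S², and t − ⟨𝐱, n₀⟩ < u₀. -/

import Mathlib

open MeasureTheory Metric Filter
open scoped Topology InnerProductSpace

noncomputable section

/-- `E3` is Euclidean three-dimensional space. -/
abbrev E3 : Type := EuclideanSpace ℝ (Fin 3)

/-- `S2` is the unit sphere in `E3`. -/
abbrev S2 : Type := Metric.sphere (0 : E3) 1

lemma inner_sphere_aux (a b : S2) :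
    1 - ⟪(a : E3), (b : E3)⟫_ℝ = dist (a : E3) (b : E3) ^ 2 / 2 := by
  have ha : ‖(a : E3)‖ = 1 := by simpa using mem_sphere_zero_iff_norm.mp a.2
  have hb : ‖(b : E3)‖ = 1 := by simpa using mem_sphere_zero_iff_norm.mp b.2
  rw [dist_eq_norm, norm_sub_sq_real, ha, hb]
  ring

/-- Given a continuous cut `C : S² → ℝ`, a direction `n₀` and `u₀ > C(n₀)`, there is a
bulk point `x = (t, 𝐱)` whose light-cone cut `C_x(n) = t − ⟨𝐱, n⟩` lies strictly above `C`
everywhere, while `C_x(n₀) < u₀`: the half-strips `K_x` cover `S_C`. -/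
theorem statement8 (C : S2 → ℝ) (hC : Continuous C) (n₀ : S2) (u₀ : ℝ)
    (h : u₀ > C n₀) :
    ∃ (t : ℝ) (x : E3), (∀ n : S2, t - ⟪x, (n : E3)⟫_ℝ > C n) ∧
      t - ⟪x, (n₀ : E3)⟫_ℝ < u₀ := by
  -- c : intermediate level between C n₀ and u₀
  set c : ℝ := (C n₀ + u₀) / 2 with hc
  have hc1 : C n₀ < c := by simp [hc]; linarith
  have hc2 : c < u₀ := by simp [hc]; linarith
  -- continuity: C n < c for n close to n₀
  have hcont : ∀ᶠ n in 𝓝 n₀, C n < c := (hC.continuousAt (x := n₀)).eventually_lt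
    continuousAt_const hc1
  obtain ⟨δ, hδpos, hδ⟩ := Metric.eventually_nhds_iff_ball.mp hcont
  -- C is bounded above
  obtain ⟨M, hM⟩ : ∃ M, ∀ n : S2, C n ≤ M := by
    obtain ⟨n₁, -, hn₁⟩ := (isCompact_univ (X := S2)).exists_isMaxOn
      ⟨n₀, trivial⟩ (hC.continuousOn)
    exact ⟨C n₁, fun n => hn₁ trivial⟩
  -- c' : level strictly between c and u₀
  set c' : ℝ := (c + u₀) / 2 with hc'
  have hcc' : c < c' := by simp [hc']; linarith
  have hc'u : c' < u₀ := by simp [hc']; linarith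
  -- choose r
  set r : ℝ := 2 * (max M c' - c' + 1) / δ ^ 2 with hr
  have hrpos : 0 ≤ r := by
    apply div_nonneg _ (by positivity)
    have := le_max_right M c'
    linarith
  refine ⟨c' + r, r • (n₀ : E3), ?_, ?_⟩
  · intro n
    have key : ⟪r • (n₀ : E3), (n : E3)⟫_ℝ = r * ⟪(n₀ : E3), (n : E3)⟫_ℝ :=
      real_inner_smul_left _ _ _
    have haux := inner_sphere_aux n₀ n
    have hd : (0:ℝ) ≤ dist (n₀ : E3) (n : E3) ^ 2 / 2 := by positivity
    rw [key]
    by_cases hball : dist n n₀ < δ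
    · have hCn : C n < c := hδ n (Metric.mem_ball.mpr hball)
      have : r * ⟪(n₀ : E3), (n : E3)⟫_ℝ ≤ r := by nlinarith
      linarith
    · push_neg at hball
      have hdist : dist (n₀ : E3) (n : E3) ≥ δ := by
        rw [dist_comm]
        exact hball
      have hsq : δ ^ 2 ≤ dist (n₀ : E3) (n : E3) ^ 2 := by
        apply sq_le_sq' <;> [linarith [dist_nonneg (x := (n₀ : E3)) (y := (n : E3))]; exact hdist]
      have h1 : 1 - ⟪(n₀ : E3), (n : E3)⟫_ℝ ≥ δ ^ 2 / 2 := by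
        rw [haux]; linarith
      have hrδ : r * (δ ^ 2 / 2) = max M c' - c' + 1 := by
        field_simp [hr]
        rw [hr, div_mul_cancel₀ _ (pow_pos hδpos 2).ne']
      have h2 : r * (1 - ⟪(n₀ : E3), (n : E3)⟫_ℝ) ≥ max M c' - c' + 1 := by
        calc r * (1 - ⟪(n₀ : E3), (n : E3)⟫_ℝ) ≥ r * (δ ^ 2 / 2) := by
              apply mul_le_mul_of_nonneg_left h1 hrpos
          _ = max M c' - c' + 1 := hrδ
      have hMn : C n ≤ max M c' := le_trans (hM n) (le_max_left _ _)
      nlinarith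
  · have hnorm : ‖(n₀ : E3)‖ = 1 := by simpa using mem_sphere_zero_iff_norm.mp n₀.2
    have : ⟪r • (n₀ : E3), (n₀ : E3)⟫_ℝ = r := by
      rw [real_inner_smul_left, real_inner_self_eq_norm_sq, hnorm]
      ring
    rw [this]
    linarith
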